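/- arXiv:1705.01434 — 2 statements merged into one kernel-verified Lean document; each statement's English description precedes it below -/
import Mathlib

section
/- Let m ≥ 1 be an integer, let d_1, …, d_m be nonnegative real numbers, and let p := #{j : d_j = 0}. Then there exists a constant C ≥ 1 such that for every real λ ≤ −1, C^{-1}(−λ)^p ≤ ∫_{E_λ} exp(∑_{j=1}^m d_j u_j) du ≤ C(−λ)^p, where E_λ := {u ∈ ℝ^m : λ ≤ u_j ≤ 0 for all j, and ∑_{j=1}^m u_j ≥ λ} and du denotes m-dimensional Lebesgue measure. -/
open MeasureTheory Finset

lemma box_indicator {m : ℕ} (f : Fin m → ℝ → ℝ) (s : Fin m → Set ℝ)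
    (u : Fin m → ℝ) :
    (Set.pi Set.univ s).indicator (fun u => ∏ j, f j (u j)) u
      = ∏ j, (s j).indicator (f j) (u j) := by
  by_cases h : u ∈ Set.pi Set.univ s
  · rw [Set.indicator_of_mem h]
    exact Finset.prod_congr rfl fun j _ =>
      (Set.indicator_of_mem (h j (Set.mem_univ j)) _).symm
  · rw [Set.indicator_of_notMem h]
    rw [Set.mem_pi] at h
    push_neg at h
    obtain ⟨j, _, hj⟩ := h
    exact (Finset.prod_eq_zero (Finset.mem_univ j)
      (Set.indicator_of_notMem hj _)).symm

lemma box_integral {m : ℕ} (f : Fin m → ℝ → ℝ) (s : Fin m → Set ℝ)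
    (hs : ∀ j, MeasurableSet (s j)) :
    ∫ u in Set.pi Set.univ s, ∏ j, f j (u j) = ∏ j, ∫ t in s j, f j t := by
  rw [← MeasureTheory.integral_indicator (MeasurableSet.univ_pi hs)]
  simp_rw [box_indicator]
  rw [MeasureTheory.integral_fintype_prod_volume_eq_prod (ι := Fin m)
    (fun j => (s j).indicator (f j))]
  exact Finset.prod_congr rfl fun j _ =>
    MeasureTheory.integral_indicator (hs j)

lemma oneD_pos (c : ℝ) (hc : 0 < c) (a : ℝ) (ha : a ≤ 0) :
    ∫ t in Set.Icc a 0, Real.exp (c * t) = (1 - Real.exp (c * a)) / c := by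
  rw [MeasureTheory.integral_Icc_eq_integral_Ioc, ← intervalIntegral.integral_of_le ha]
  rw [intervalIntegral.integral_comp_mul_left (fun x => Real.exp x) hc.ne']
  rw [mul_zero, integral_exp, Real.exp_zero, smul_eq_mul]
  ring

lemma oneD_zero (a : ℝ) (ha : a ≤ 0) :
    ∫ t in Set.Icc a 0, Real.exp ((0:ℝ) * t) = -a := by
  simp only [zero_mul, Real.exp_zero]
  rw [MeasureTheory.setIntegral_const, measureReal_def, Real.volume_Icc, smul_eq_mul, mul_one,
    ENNReal.toReal_ofReal (by linarith)]
  ring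

lemma box_val {m : ℕ} (d : Fin m → ℝ) (hd : ∀ j, 0 ≤ d j) (a : ℝ) (ha : a ≤ 0) :
    ∫ u in Set.pi Set.univ (fun _ : Fin m => Set.Icc a 0),
        Real.exp (∑ j, d j * u j)
      = ∏ j, (if d j = 0 then -a else (1 - Real.exp (d j * a)) / d j) := by
  have : ∀ u : Fin m → ℝ, Real.exp (∑ j, d j * u j)
      = ∏ j, Real.exp (d j * u j) := fun u => Real.exp_sum _ _
  simp_rw [this]
  rw [box_integral (fun j t => Real.exp (d j * t)) _ (fun _ => measurableSet_Icc)]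
  refine Finset.prod_congr rfl fun j _ => ?_
  by_cases h : d j = 0
  · rw [if_pos h, h, oneD_zero a ha]
  · rw [if_neg h, oneD_pos (d j) (lt_of_le_of_ne (hd j) (Ne.symm h)) a ha]

/-- asymptotics of the exponential integral over the truncated simplex
`E_λ = {u ∈ ℝ^m : λ ≤ u_j ≤ 0 ∀ j, ∑ u_j ≥ λ}`, where `p` is the number of vanishing
exponents `d_j`. -/
theorem stmt_0 (m : ℕ) (hm : 1 ≤ m) (d : Fin m → ℝ) (hd : ∀ j, 0 ≤ d j)
    (p : ℕ) (hp : p = (Finset.univ.filter fun j => d j = 0).card) :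
    ∃ C : ℝ, 1 ≤ C ∧ ∀ lam : ℝ, lam ≤ -1 →
      C⁻¹ * (-lam) ^ p ≤
        (∫ u in {u : Fin m → ℝ | (∀ j, lam ≤ u j ∧ u j ≤ 0) ∧ lam ≤ ∑ j, u j},
          Real.exp (∑ j, d j * u j)) ∧
      (∫ u in {u : Fin m → ℝ | (∀ j, lam ≤ u j ∧ u j ≤ 0) ∧ lam ≤ ∑ j, u j},
          Real.exp (∑ j, d j * u j)) ≤ C * (-lam) ^ p := by
  classical
  have hm0 : (0:ℝ) < m := by exact_mod_cast hm
  set S : Finset (Fin m) := Finset.univ.filter fun j => d j = 0 with hS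
  set T : Finset (Fin m) := Finset.univ.filter fun j => ¬ d j = 0 with hT
  have hdT : ∀ j ∈ T, 0 < d j := fun j hj =>
    lt_of_le_of_ne (hd j) (Ne.symm (Finset.mem_filter.mp hj).2)
  -- constants
  set c : Fin m → ℝ := fun j => (1 - Real.exp (-(d j) / m)) / d j with hc
  have hcpos : ∀ j ∈ T, 0 < c j := by
    intro j hj
    have hdj := hdT j hj
    apply div_pos _ hdj
    have : Real.exp (-(d j) / m) < 1 := by
      rw [Real.exp_lt_one_iff]
      exact div_neg_of_neg_of_pos (neg_neg_of_pos hdj) hm0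
    linarith
  set Cup : ℝ := ∏ j ∈ T, (d j)⁻¹ with hCup
  set Clow : ℝ := (m:ℝ) ^ p * (∏ j ∈ T, c j)⁻¹ with hClow
  have hprodc : 0 < ∏ j ∈ T, c j := Finset.prod_pos hcpos
  have hCuppos : 0 ≤ Cup := Finset.prod_nonneg fun j hj => inv_nonneg.mpr (hd j)
  have hClowpos : 0 < Clow :=
    mul_pos (pow_pos hm0 p) (inv_pos.mpr hprodc)
  refine ⟨max 1 (max Cup Clow), le_max_left _ _, ?_⟩
  set C : ℝ := max 1 (max Cup Clow) with hCdef
  have hC1 : (1:ℝ) ≤ C := le_max_left _ _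
  have hCpos : (0:ℝ) < C := lt_of_lt_of_le one_pos hC1
  intro lam hlam
  have hlam0 : lam ≤ 0 := by linarith
  have hlamneg : 0 ≤ -lam := by linarith
  -- the set E and the two boxes
  set E : Set (Fin m → ℝ) :=
    {u : Fin m → ℝ | (∀ j, lam ≤ u j ∧ u j ≤ 0) ∧ lam ≤ ∑ j, u j} with hE
  set Bbig : Set (Fin m → ℝ) := Set.pi Set.univ (fun _ : Fin m => Set.Icc lam 0)
    with hBbig
  set Bsmall : Set (Fin m → ℝ) :=
    Set.pi Set.univ (fun _ : Fin m => Set.Icc (lam / m) 0) with hBsmall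
  have hEsub : E ⊆ Bbig := by
    intro u hu j _
    exact ⟨(hu.1 j).1, (hu.1 j).2⟩
  have hsmallsub : Bsmall ⊆ E := by
    intro u hu
    have hmem : ∀ j, lam / m ≤ u j ∧ u j ≤ 0 := fun j => hu j (Set.mem_univ j)
    have hlm : lam ≤ lam / m := by
      rw [le_div_iff₀ hm0]
      nlinarith [mul_nonneg (show (0:ℝ) ≤ (m:ℝ) - 1 by exact_mod_cast by linarith : (0:ℝ) ≤ (m:ℝ) - 1) (show (0:ℝ) ≤ -lam by linarith)]
    constructor
    · intro j; exact ⟨le_trans hlm (hmem j).1, (hmem j).2⟩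
    · calc lam = (m:ℝ) * (lam / m) := by field_simp
        _ = ∑ _j : Fin m, lam / m := by
            rw [Finset.sum_const, Finset.card_univ, Fintype.card_fin, nsmul_eq_mul]
        _ ≤ ∑ j, u j := Finset.sum_le_sum fun j _ => (hmem j).1
  -- integrability
  have hcont : Continuous fun u : Fin m → ℝ => Real.exp (∑ j, d j * u j) := by
    fun_prop
  have hcomp : IsCompact Bbig :=
    isCompact_univ_pi fun _ => isCompact_Icc
  have hint : IntegrableOn (fun u : Fin m → ℝ => Real.exp (∑ j, d j * u j))
      Bbig volume := hcont.continuousOn.integrableOn_compact hcomp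
  have hintE : IntegrableOn (fun u : Fin m → ℝ => Real.exp (∑ j, d j * u j))
      E volume := hint.mono_set hEsub
  have hnonneg : ∀ u : Fin m → ℝ, 0 ≤ Real.exp (∑ j, d j * u j) :=
    fun u => (Real.exp_pos _).le
  -- monotonicity
  have hlow : ∫ u in Bsmall, Real.exp (∑ j, d j * u j)
      ≤ ∫ u in E, Real.exp (∑ j, d j * u j) :=
    MeasureTheory.setIntegral_mono_set hintE
      (Filter.Eventually.of_forall hnonneg) (hsmallsub.eventuallyLE)
  have hhigh : ∫ u in E, Real.exp (∑ j, d j * u j)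
      ≤ ∫ u in Bbig, Real.exp (∑ j, d j * u j) :=
    MeasureTheory.setIntegral_mono_set hint
      (Filter.Eventually.of_forall hnonneg) (hEsub.eventuallyLE)
  -- values of the box integrals
  have hvalbig : ∫ u in Bbig, Real.exp (∑ j, d j * u j)
      = ∏ j, (if d j = 0 then -lam else (1 - Real.exp (d j * lam)) / d j) :=
    box_val d hd lam hlam0
  have hdivle : lam / m ≤ 0 := div_nonpos_of_nonpos_of_nonneg hlam0 hm0.le
  have hvalsmall : ∫ u in Bsmall, Real.exp (∑ j, d j * u j)
      = ∏ j, (if d j = 0 then -(lam/m) else (1 - Real.exp (d j * (lam/m))) / d j) :=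
    box_val d hd (lam / m) hdivle
  -- split products
  have hsplit : ∀ a : ℝ, ∀ g : Fin m → ℝ,
      (∏ j, (if d j = 0 then a else g j))
        = a ^ p * ∏ j ∈ T, g j := by
    intro a g
    rw [← Finset.prod_filter_mul_prod_filter_not Finset.univ (fun j => d j = 0)]
    congr 1
    · rw [hp]
      rw [Finset.prod_congr rfl (fun j hj => if_pos (Finset.mem_filter.mp hj).2),
        Finset.prod_const]
    · exact Finset.prod_congr rfl fun j hj =>
        if_neg (Finset.mem_filter.mp hj).2
  constructor
  · -- lower bound
    refine le_trans ?_ hlow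
    rw [hvalsmall, hsplit (-(lam/m))]
    have h1 : C⁻¹ ≤ Clow⁻¹ := by
      apply inv_anti₀ hClowpos
      exact le_trans (le_max_right Cup Clow) (le_max_right 1 _)
    have h2 : Clow⁻¹ * (-lam) ^ p = (-(lam/m)) ^ p * ∏ j ∈ T, c j := by
      rw [hClow, mul_inv, inv_inv, ← neg_div, div_pow]
      ring
    calc C⁻¹ * (-lam) ^ p ≤ Clow⁻¹ * (-lam) ^ p := by
          apply mul_le_mul_of_nonneg_right h1 (pow_nonneg hlamneg p)
      _ = (-(lam/m)) ^ p * ∏ j ∈ T, c j := h2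
      _ ≤ (-(lam/m)) ^ p * ∏ j ∈ T, (1 - Real.exp (d j * (lam/m))) / d j := by
          apply mul_le_mul_of_nonneg_left _ (pow_nonneg (by linarith [hdivle]) p)
          apply Finset.prod_le_prod (fun j hj => (hcpos j hj).le)
          intro j hj
          have hdj := hdT j hj
          have key : d j * (lam / m) ≤ -(d j) / m := by
            rw [← mul_div_assoc, div_le_div_iff₀ hm0 hm0]
            nlinarith [mul_nonneg (mul_nonneg (hd j) hm0.le)
              (show (0:ℝ) ≤ -(lam + 1) by linarith)]
          have hexp : Real.exp (d j * (lam / m)) ≤ Real.exp (-(d j) / m) :=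
            Real.exp_le_exp.mpr key
          rw [hc]
          apply (div_le_div_iff_of_pos_right hdj).mpr
          linarith
  · -- upper bound
    refine le_trans hhigh ?_
    rw [hvalbig, hsplit (-lam)]
    have h1 : Cup ≤ C := le_trans (le_max_left Cup Clow) (le_max_right 1 _)
    calc (-lam) ^ p * ∏ j ∈ T, (1 - Real.exp (d j * lam)) / d j
        ≤ (-lam) ^ p * Cup := by
          apply mul_le_mul_of_nonneg_left _ (pow_nonneg hlamneg p)
          apply Finset.prod_le_prod
          · intro j hj
            apply div_nonneg _ (hdT j hj).le
            have : Real.exp (d j * lam) ≤ 1 := by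
              rw [Real.exp_le_one_iff]
              exact mul_nonpos_of_nonneg_of_nonpos (hd j) hlam0
            linarith
          · intro j hj
            rw [div_le_iff₀ (hdT j hj), inv_mul_cancel₀ (hdT j hj).ne']
            have := (Real.exp_pos (d j * lam)).le
            linarith
      _ ≤ C * (-lam) ^ p := by
          rw [mul_comm]
          exact mul_le_mul_of_nonneg_right h1 (pow_nonneg hlamneg p)
end

section
/- Fix β > 0, an integer N ≥ 1, and C₀ ≥ 1. Let D* := {z ∈ ℂ : 0 < |z| ≤ 1} and let h : D* → (0,∞) be continuous with C₀^{-1}|z|^{−2(1−β)}(−log|z|)^{N−1} ≤ h(z) ≤ C₀|z|^{−2(1−β)}(−log|z|)^{N−1} for all 0 < |z| ≤ 1/2. Let d_h denote the induced path metric on D* (the infimum of ∫_0^1 √(h(γ(t)))|γ'(t)| dt over piecewise C¹ paths in D*). Then the d_h-diameter of the punctured δ-disk tends to zero as δ → 0: lim_{δ→0⁺} sup{ d_h(x,y) : 0 < |x| ≤ δ, 0 < |y| ≤ δ } = 0. -/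
open MeasureTheory

/-- The punctured closed unit disk `{z : 0 < |z| ≤ 1}`. -/
def Dstar : Set ℂ := {z : ℂ | 0 < ‖z‖ ∧ ‖z‖ ≤ 1}

/-- A path `γ : [0,1] → ℂ` is piecewise continuously differentiable: it is continuous on
`[0,1]` and continuously differentiable off a finite set of parameters. -/
def PiecewiseC1 (γ : ℝ → ℂ) : Prop :=
  ContinuousOn γ (Set.Icc 0 1) ∧
  ∃ T : Finset ℝ, ∀ t ∈ Set.Icc (0:ℝ) 1 \ (T : Set ℝ),
    DifferentiableAt ℝ γ t ∧ ContinuousAt (deriv γ) t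

/-- The `h`-length `L_h(γ) = ∫_0^1 √(h(γ(t))) |γ'(t)| dt` of a path with respect to the
conformal factor `h`. -/
noncomputable def lengthH (h : ℂ → ℝ) (γ : ℝ → ℂ) : ℝ :=
  ∫ t in (0:ℝ)..1, Real.sqrt (h (γ t)) * ‖deriv γ t‖

/-- The induced path (pseudo)distance `d_h` on the punctured disk: the infimum of the
`h`-lengths of piecewise `C¹` paths in `D*` joining the two points. -/
noncomputable def dH (h : ℂ → ℝ) (x y : ℂ) : ℝ :=
  sInf {L : ℝ | ∃ γ : ℝ → ℂ, PiecewiseC1 γ ∧ (∀ t ∈ Set.Icc (0:ℝ) 1, γ t ∈ Dstar) ∧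
    γ 0 = x ∧ γ 1 = y ∧ L = lengthH h γ}

/-- `e^{βs}(-s)^K ≤ K!/β^K` for `s ≤ 0`. -/
lemma aux_exp_pow (K : ℕ) {β s : ℝ} (hβ : 0 < β) (hs : s ≤ 0) :
    Real.exp (β * s) * (-s) ^ K ≤ K.factorial / β ^ K := by
  have hx0 : 0 ≤ -(β * s) := by nlinarith
  have hneg : (-s : ℝ) = -(β * s) / β := by field_simp
  have hpow : (-(β * s)) ^ K ≤ K.factorial * Real.exp (-(β * s)) := by
    have h1 : (-(β * s)) ^ K / K.factorial ≤ Real.exp (-(β * s)) := by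
      refine le_trans ?_ (Real.sum_le_exp_of_nonneg hx0 (K + 1))
      exact Finset.single_le_sum (f := fun i => (-(β * s)) ^ i / i.factorial)
        (fun i _ => by positivity) (Finset.self_mem_range_succ K)
    have hf : (0:ℝ) < K.factorial := by positivity
    calc (-(β * s)) ^ K = ((-(β * s)) ^ K / K.factorial) * K.factorial := by field_simp
    _ ≤ Real.exp (-(β * s)) * K.factorial := by
        exact mul_le_mul_of_nonneg_right h1 hf.le
    _ = K.factorial * Real.exp (-(β * s)) := by ring
  have hβK : (0:ℝ) < β ^ K := by positivity
  rw [hneg, div_pow, ← mul_div_assoc, div_le_div_iff_of_pos_right hβK]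
  calc Real.exp (β * s) * (-(β * s)) ^ K
      ≤ Real.exp (β * s) * (K.factorial * Real.exp (-(β * s))) :=
        mul_le_mul_of_nonneg_left hpow (Real.exp_pos _).le
    _ = K.factorial * (Real.exp (β * s) * Real.exp (-(β * s))) := by ring
    _ = K.factorial := by rw [← Real.exp_add]; simp

set_option maxHeartbeats 1000000 in
/-- the `d_h`-diameter of the punctured `δ`-disk tends to zero as `δ → 0⁺`:
for every `ε > 0` there is `δ₀ > 0` such that any two points of the punctured `δ₀`-disk
are at `d_h`-distance at most `ε`. -/
theorem stmt_7 (β : ℝ) (hβ : 0 < β) (N : ℕ) (hN : 1 ≤ N) (C₀ : ℝ) (hC₀ : 1 ≤ C₀)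
    (h : ℂ → ℝ) (hcont : ContinuousOn h Dstar)
    (hpos : ∀ z ∈ Dstar, 0 < h z)
    (hbound : ∀ z : ℂ, 0 < ‖z‖ → ‖z‖ ≤ 1/2 →
      C₀⁻¹ * (‖z‖ ^ (-(2*(1-β))) * (-Real.log (‖z‖)) ^ (N-1)) ≤ h z ∧
      h z ≤ C₀ * (‖z‖ ^ (-(2*(1-β))) * (-Real.log (‖z‖)) ^ (N-1))) :
    ∀ ε : ℝ, 0 < ε → ∃ δ₀ : ℝ, 0 < δ₀ ∧ δ₀ ≤ 1 ∧
      ∀ x y : ℂ, 0 < ‖x‖ → ‖x‖ ≤ δ₀ →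
        0 < ‖y‖ → ‖y‖ ≤ δ₀ → dH h x y ≤ ε := by
  intro ε hε
  set K : ℕ := N - 1 with hKdef
  have hC₀pos : (0:ℝ) < C₀ := lt_of_lt_of_le one_pos hC₀
  set B : ℝ := Real.sqrt (C₀ * (K.factorial / β ^ K)) with hBdef
  have hBpos : 0 < B := Real.sqrt_pos.2 (by positivity)
  set B' : ℝ := B * (2 / β + 2 * Real.pi) with hB'def
  have hB'pos : 0 < B' := by
    have := Real.pi_pos; positivity
  set δ₀ : ℝ := min (1/2) ((ε / B') ^ (2 / β)) with hδdef
  have hδpos : 0 < δ₀ :=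
    lt_min (by norm_num) (Real.rpow_pos_of_pos (by positivity) _)
  have hδhalf : δ₀ ≤ 1/2 := min_le_left _ _
  have hδ1 : δ₀ ≤ 1 := le_trans hδhalf (by norm_num)
  -- key numeric bound
  have hkey : B' * δ₀ ^ (β / 2) ≤ ε := by
    have h1 : δ₀ ^ (β / 2) ≤ ((ε / B') ^ (2 / β)) ^ (β / 2) :=
      Real.rpow_le_rpow hδpos.le (min_le_right _ _) (by positivity)
    have h2 : ((ε / B') ^ (2 / β)) ^ (β / 2) = ε / B' := by
      rw [← Real.rpow_mul (by positivity)]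
      rw [show (2 / β) * (β / 2) = 1 by field_simp, Real.rpow_one]
    rw [h2] at h1
    calc B' * δ₀ ^ (β / 2) ≤ B' * (ε / B') := by
          exact mul_le_mul_of_nonneg_left h1 hB'pos.le
      _ = ε := by field_simp
  refine ⟨δ₀, hδpos, hδ1, ?_⟩
  intro x y hx0 hxδ hy0 hyδ
  have hxne : x ≠ 0 := by
    intro hx; rw [hx] at hx0; simp at hx0
  have hyne : y ≠ 0 := by
    intro hy; rw [hy] at hy0; simp at hy0
  set w : ℂ := Complex.log y - Complex.log x with hwdef
  set γ : ℝ → ℂ := fun t => Complex.exp (Complex.log x + (t : ℂ) * w) with hγdef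
  set a : ℝ := Real.log (‖x‖) with hadef
  set b : ℝ := Real.log (‖y‖) with hbdef
  set L : ℝ := Real.log δ₀ with hLdef
  have haL : a ≤ L := Real.log_le_log hx0 hxδ
  have hbL : b ≤ L := Real.log_le_log hy0 hyδ
  have hLneg : L ≤ Real.log (1/2) := Real.log_le_log hδpos hδhalf
  have hLhalf : Real.log (1/2) < 0 := Real.log_neg (by norm_num) (by norm_num)
  -- derivative of γ
  have hder : ∀ t : ℝ, HasDerivAt γ (γ t * w) t := by
    intro t
    have h1 : HasDerivAt (fun t : ℝ => Complex.log x + (t : ℂ) * w) w t := by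
      have h2 : HasDerivAt (fun t : ℝ => (t : ℂ)) 1 t := by
        simpa using (hasDerivAt_id t).ofReal_comp
      simpa using (h2.mul_const w).const_add (Complex.log x)
    simpa using h1.cexp
  have hderiv_eq : deriv γ = fun t => γ t * w := funext fun t => (hder t).deriv
  have hγcont : Continuous γ :=
    Complex.continuous_exp.comp
      (continuous_const.add (Complex.continuous_ofReal.mul continuous_const))
  -- modulus of γ
  set s : ℝ → ℝ := fun t => a + t * (b - a) with hsdef
  have habs : ∀ t : ℝ, ‖γ t‖ = Real.exp (s t) := by
    intro t
    rw [hγdef]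
    simp only [Complex.norm_exp, Complex.add_re, Complex.log_re]
    congr 1
    have : ((t : ℂ) * w).re = t * w.re := by
      simp [Complex.mul_re]
    rw [this, hwdef]
    simp [Complex.sub_re, Complex.log_re, hsdef, hadef, hbdef]
  have hsL : ∀ t ∈ Set.Icc (0:ℝ) 1, s t ≤ L := by
    intro t ht
    have h1 : 0 ≤ t * (L - b) := mul_nonneg ht.1 (by linarith)
    have h2 : 0 ≤ (1 - t) * (L - a) := mul_nonneg (by linarith [ht.2]) (by linarith)
    simp only [hsdef]
    nlinarith
  have hmem : ∀ t ∈ Set.Icc (0:ℝ) 1, γ t ∈ Dstar := by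
    intro t ht
    constructor
    · rw [habs]; exact Real.exp_pos _
    · rw [habs]
      calc Real.exp (s t) ≤ Real.exp L := Real.exp_le_exp.2 (hsL t ht)
        _ ≤ Real.exp 0 := Real.exp_le_exp.2 (by linarith)
        _ = 1 := Real.exp_zero
  have hγ0 : γ 0 = x := by
    simp [hγdef, Complex.exp_log hxne]
  have hγ1 : γ 1 = y := by
    simp only [hγdef, Complex.ofReal_one, one_mul, hwdef]
    rw [show Complex.log x + (Complex.log y - Complex.log x) = Complex.log y by ring]
    exact Complex.exp_log hyne
  -- half disk bound
  have hhalf : ∀ t ∈ Set.Icc (0:ℝ) 1, ‖γ t‖ ≤ 1/2 := by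
    intro t ht
    rw [habs]
    calc Real.exp (s t) ≤ Real.exp (Real.log (1/2)) :=
          Real.exp_le_exp.2 (le_trans (hsL t ht) hLneg)
      _ = 1/2 := Real.exp_log (by norm_num)
  -- pointwise bound on the integrand
  set c₁ : ℝ := (β / 2) * a with hc₁def
  set c₂ : ℝ := (β / 2) * (b - a) with hc₂def
  set g : ℝ → ℝ := fun t => B * ‖w‖ * Real.exp (c₁ + c₂ * t) with hgdef
  have hBsq : B ^ 2 = C₀ * (K.factorial / β ^ K) := Real.sq_sqrt (by positivity)
  have hptwise : ∀ t ∈ Set.Icc (0:ℝ) 1,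
      Real.sqrt (h (γ t)) * ‖deriv γ t‖ ≤ g t := by
    intro t ht
    have hst : s t ≤ L := hsL t ht
    have hstneg : s t < 0 := lt_of_le_of_lt (le_trans hst hLneg) hLhalf
    have habs_pos : 0 < ‖γ t‖ := by rw [habs]; exact Real.exp_pos _
    have hb2 := (hbound (γ t) habs_pos (hhalf t ht)).2
    -- rewrite the bound using s t
    have hrw : ‖γ t‖ ^ (-(2*(1-β))) * (-Real.log (‖γ t‖)) ^ (N-1)
        = Real.exp ((β - 2) * s t) * (Real.exp (β * s t) * (-(s t)) ^ K) := by
      rw [habs, Real.rpow_def_of_pos (Real.exp_pos _), Real.log_exp]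
      have hme : Real.exp ((β - 2) * s t) * Real.exp (β * s t)
          = Real.exp (s t * -(2*(1-β))) := by
        rw [← Real.exp_add]; ring_nf
      rw [← mul_assoc, hme]
    have haux : Real.exp (β * s t) * (-(s t)) ^ K ≤ K.factorial / β ^ K :=
      aux_exp_pow K hβ hstneg.le
    have hh_le : h (γ t) ≤ B ^ 2 * Real.exp ((β - 2) * s t) := by
      rw [hBsq]
      calc h (γ t) ≤ C₀ * (Real.exp ((β - 2) * s t) * (Real.exp (β * s t) * (-(s t)) ^ K)) := by
            rw [← hrw]; exact hb2
        _ ≤ C₀ * (Real.exp ((β - 2) * s t) * (K.factorial / β ^ K)) := by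
            apply mul_le_mul_of_nonneg_left _ hC₀pos.le
            exact mul_le_mul_of_nonneg_left haux (Real.exp_pos _).le
        _ = C₀ * (K.factorial / β ^ K) * Real.exp ((β - 2) * s t) := by ring
    have hsqrt : Real.sqrt (h (γ t)) ≤ B * Real.exp ((β - 2) / 2 * s t) := by
      have h2 : B * Real.exp ((β - 2) / 2 * s t)
          = Real.sqrt (B ^ 2 * Real.exp ((β - 2) * s t)) := by
        rw [Real.sqrt_mul (by positivity), Real.sqrt_sq hBpos.le, ← Real.exp_half]
        ring_nf
      rw [h2]
      exact Real.sqrt_le_sqrt hh_le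
    have hdγ : ‖deriv γ t‖ = Real.exp (s t) * ‖w‖ := by
      rw [hderiv_eq]
      simp [map_mul, habs]
    calc Real.sqrt (h (γ t)) * ‖deriv γ t‖
        ≤ (B * Real.exp ((β - 2) / 2 * s t)) * (Real.exp (s t) * ‖w‖) := by
          rw [hdγ]
          exact mul_le_mul_of_nonneg_right hsqrt (by positivity)
      _ = B * ‖w‖ * (Real.exp ((β - 2) / 2 * s t) * Real.exp (s t)) := by ring
      _ = g t := by
          rw [hgdef, ← Real.exp_add]
          simp only [hsdef, hc₁def, hc₂def]
          ring_nf
  -- integrability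
  have hIcc : Set.uIcc (0:ℝ) 1 = Set.Icc 0 1 := Set.uIcc_of_le (by norm_num)
  have hfint : IntervalIntegrable
      (fun t => Real.sqrt (h (γ t)) * ‖deriv γ t‖) volume 0 1 := by
    apply ContinuousOn.intervalIntegrable
    rw [hIcc]
    apply ContinuousOn.mul
    · exact Real.continuous_sqrt.comp_continuousOn
        (hcont.comp hγcont.continuousOn hmem)
    · rw [hderiv_eq]
      exact (continuous_norm.comp ((hγcont.mul continuous_const))).continuousOn
  have hgint : IntervalIntegrable g volume 0 1 := by
    apply Continuous.intervalIntegrable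
    fun_prop
  -- the exponential integral
  set I : ℝ := ∫ t in (0:ℝ)..1, Real.exp (c₁ + c₂ * t) with hIdef
  have hInn : 0 ≤ I :=
    intervalIntegral.integral_nonneg (by norm_num) (fun t _ => (Real.exp_pos _).le)
  set Eδ : ℝ := δ₀ ^ (β / 2) with hEδdef
  have hEδ_eq : Eδ = Real.exp ((β / 2) * L) := by
    rw [hEδdef, Real.rpow_def_of_pos hδpos, hLdef]; ring_nf
  have hexp_le : ∀ u : ℝ, u ≤ (β/2) * L → Real.exp u ≤ Eδ := by
    intro u hu; rw [hEδ_eq]; exact Real.exp_le_exp.2 hu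
  have hc₁le : c₁ ≤ (β/2) * L := by
    rw [hc₁def]; apply mul_le_mul_of_nonneg_left haL (by positivity)
  have hc₁c₂le : c₁ + c₂ ≤ (β/2) * L := by
    rw [hc₁def, hc₂def]
    have := mul_le_mul_of_nonneg_left hbL (show (0:ℝ) ≤ β/2 by positivity)
    linarith
  have hI_le : I ≤ Eδ := by
    have h1 : ∀ t ∈ Set.Icc (0:ℝ) 1, Real.exp (c₁ + c₂ * t) ≤ Eδ := by
      intro t ht
      apply hexp_le
      rcases le_or_gt 0 c₂ with hc | hc
      · have : c₂ * t ≤ c₂ := by nlinarith [ht.2]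
        linarith
      · have : c₂ * t ≤ 0 := by nlinarith [ht.1]
        linarith
    calc I ≤ ∫ t in (0:ℝ)..1, Eδ := by
          apply intervalIntegral.integral_mono_on (by norm_num) _ _ h1
          · exact Continuous.intervalIntegrable (by fun_prop) _ _
          · exact intervalIntegrable_const
      _ = Eδ := by simp
  have hc₂I : |c₂| * I ≤ Eδ := by
    rcases eq_or_ne c₂ 0 with hc | hc
    · rw [hc]; simp
      rw [hEδ_eq]; positivity
    · have hIval : I = (Real.exp (c₁ + c₂) - Real.exp c₁) / c₂ := by
        rw [hIdef]
        have hF : ∀ t ∈ Set.uIcc (0:ℝ) 1,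
            HasDerivAt (fun u : ℝ => Real.exp (c₁ + c₂ * u) / c₂)
              (Real.exp (c₁ + c₂ * t)) t := by
          intro t _
          have h1 : HasDerivAt (fun u : ℝ => c₁ + c₂ * u) c₂ t := by
            simpa using ((hasDerivAt_id t).const_mul c₂).const_add c₁
          have h2 := (h1.exp).div_const c₂
          simpa [mul_div_cancel_right₀ _ hc] using h2
        rw [intervalIntegral.integral_eq_sub_of_hasDerivAt hF
          (Continuous.intervalIntegrable (by fun_prop) _ _)]
        simp
        ring
      have h1 : c₂ * I = Real.exp (c₁ + c₂) - Real.exp c₁ := by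
        rw [hIval]; field_simp
      have h2 : |c₂| * I = |Real.exp (c₁ + c₂) - Real.exp c₁| := by
        rw [← abs_of_nonneg hInn, ← abs_mul, h1]
      rw [h2]
      have e1 : Real.exp (c₁ + c₂) ≤ Eδ := hexp_le _ hc₁c₂le
      have e2 : Real.exp c₁ ≤ Eδ := hexp_le _ hc₁le
      have p1 := Real.exp_pos (c₁ + c₂)
      have p2 := Real.exp_pos c₁
      rw [abs_le]
      constructor <;> linarith
  -- |w| bound
  have hw_le : ‖w‖ ≤ |b - a| + 2 * Real.pi := by
    have h1 := Complex.norm_le_abs_re_add_abs_im w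
    have h2 : w.re = b - a := by
      rw [hwdef]; simp [Complex.sub_re, Complex.log_re, hadef, hbdef]
    have h3 : |w.im| ≤ 2 * Real.pi := by
      rw [hwdef]
      simp only [Complex.sub_im, Complex.log_im]
      calc |y.arg - x.arg| ≤ |y.arg| + |x.arg| := abs_sub _ _
        _ ≤ Real.pi + Real.pi := add_le_add (Complex.abs_arg_le_pi y) (Complex.abs_arg_le_pi x)
        _ = 2 * Real.pi := by ring
    rw [h2] at h1
    linarith
  have hba_c₂ : |b - a| = (2 / β) * |c₂| := by
    rw [hc₂def, abs_mul, abs_of_nonneg (show (0:ℝ) ≤ β/2 by positivity)]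
    field_simp
  -- final chain
  have hgI : (∫ t in (0:ℝ)..1, g t) = B * ‖w‖ * I := by
    rw [hgdef, hIdef, ← intervalIntegral.integral_const_mul]
  have hlen : lengthH h γ ≤ ε := by
    rw [lengthH]
    calc (∫ t in (0:ℝ)..1, Real.sqrt (h (γ t)) * ‖deriv γ t‖)
        ≤ ∫ t in (0:ℝ)..1, g t :=
          intervalIntegral.integral_mono_on (by norm_num) hfint hgint hptwise
      _ = B * (‖w‖ * I) := by rw [hgI]; ring
      _ ≤ B * ((|b - a| + 2 * Real.pi) * I) := by
          apply mul_le_mul_of_nonneg_left _ hBpos.le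
          exact mul_le_mul_of_nonneg_right hw_le hInn
      _ = B * ((2 / β) * (|c₂| * I) + 2 * Real.pi * I) := by rw [hba_c₂]; ring
      _ ≤ B * ((2 / β) * Eδ + 2 * Real.pi * Eδ) := by
          apply mul_le_mul_of_nonneg_left _ hBpos.le
          have t1 : (2/β) * (|c₂| * I) ≤ (2/β) * Eδ :=
            mul_le_mul_of_nonneg_left hc₂I (by positivity)
          have t2 : 2 * Real.pi * I ≤ 2 * Real.pi * Eδ :=
            mul_le_mul_of_nonneg_left hI_le (by positivity)
          linarith
      _ = B' * Eδ := by rw [hB'def]; ring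
      _ ≤ ε := hkey
  -- conclude via csInf
  have hbdd : BddBelow {L : ℝ | ∃ γ : ℝ → ℂ, PiecewiseC1 γ ∧
      (∀ t ∈ Set.Icc (0:ℝ) 1, γ t ∈ Dstar) ∧ γ 0 = x ∧ γ 1 = y ∧ L = lengthH h γ} := by
    refine ⟨0, ?_⟩
    rintro L ⟨γ', _, _, _, _, rfl⟩
    exact intervalIntegral.integral_nonneg (by norm_num)
      (fun t _ => mul_nonneg (Real.sqrt_nonneg _) (norm_nonneg _))
  have hmemS : lengthH h γ ∈ {L : ℝ | ∃ γ : ℝ → ℂ, PiecewiseC1 γ ∧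
      (∀ t ∈ Set.Icc (0:ℝ) 1, γ t ∈ Dstar) ∧ γ 0 = x ∧ γ 1 = y ∧ L = lengthH h γ} := by
    refine ⟨γ, ⟨hγcont.continuousOn, ∅, fun t _ => ⟨(hder t).differentiableAt, ?_⟩⟩,
      hmem, hγ0, hγ1, rfl⟩
    rw [hderiv_eq]
    exact (hγcont.mul continuous_const).continuousAt
  exact le_trans (csInf_le hbdd hmemS) hlen
end
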